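/- arXiv:2102.01965 — 2 statements merged into one kernel-verified Lean document; each statement's English description precedes it below -/
import Mathlib

section
/- Let Λ, Γ be g-fusion Bessel sequences in H with bounds D₁, D₂ and frame operator S_{ΓΛ}. Then S_{ΓΛ} is bounded below if and only if there exists K ∈ B(H) such that {T_j}_{j∈J} with T_j = v_j w_j K P_{V_j} Γ_j* Λ_j P_{W_j} is a resolution of the identity operator on H. -/
open ContinuousLinearMap

noncomputable def proj {E : Type*} [NormedAddCommGroup E] [InnerProductSpace ℂ E]
    (W : Submodule ℂ E) [CompleteSpace W] : E →L[ℂ] E :=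
  W.subtypeL.comp (W.orthogonalProjectionOnto)

/-- S_{ΓΛ} is bounded below iff there exists K ∈ B(H) such that
{v_j w_j K P_{V_j} Γ_j* Λ_j P_{W_j}} is a resolution of the identity. -/
theorem stmt10
    {ι E : Type*} [NormedAddCommGroup E] [InnerProductSpace ℂ E] [CompleteSpace E]
    {G : ι → Type*} [∀ j, NormedAddCommGroup (G j)] [∀ j, InnerProductSpace ℂ (G j)]
    [∀ j, CompleteSpace (G j)]
    (W V' : ι → Submodule ℂ E) [∀ j, CompleteSpace (W j)] [∀ j, CompleteSpace (V' j)]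
    (w v : ι → ℝ) (hw : ∀ j, 0 < w j) (hv : ∀ j, 0 < v j)
    (Λ Γ : ∀ j, E →L[ℂ] G j)
    (D₁ D₂ : ℝ)
    (hΛ : ∀ f : E, Summable (fun j => (w j) ^ 2 * ‖Λ j (proj (W j) f)‖ ^ 2) ∧
      ∑' j, (w j) ^ 2 * ‖Λ j (proj (W j) f)‖ ^ 2 ≤ D₁ * ‖f‖ ^ 2)
    (hΓ : ∀ f : E, Summable (fun j => (v j) ^ 2 * ‖Γ j (proj (V' j) f)‖ ^ 2) ∧
      ∑' j, (v j) ^ 2 * ‖Γ j (proj (V' j) f)‖ ^ 2 ≤ D₂ * ‖f‖ ^ 2)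
    (S : E →L[ℂ] E)
    (hS : ∀ f : E, HasSum
      (fun j => (v j * w j) • proj (V' j)
        (ContinuousLinearMap.adjoint (Γ j) (Λ j (proj (W j) f)))) (S f)) :
    (∃ M > (0 : ℝ), ∀ f : E, M * ‖f‖ ≤ ‖S f‖) ↔
    ∃ K : E →L[ℂ] E, ∀ f : E, HasSum
      (fun j => (v j * w j) • K (proj (V' j)
        (ContinuousLinearMap.adjoint (Γ j) (Λ j (proj (W j) f))))) f := by
  constructor
  · rintro ⟨M, hM, hbd⟩
    -- S is injective with closed range
    have hanti : AntilipschitzWith (M⁻¹).toNNReal S := by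
      apply AddMonoidHomClass.antilipschitz_of_bound
      intro x
      rw [Real.coe_toNNReal _ (by positivity)]
      rw [inv_mul_eq_div, le_div_iff₀ hM, mul_comm]
      exact hbd x
    have hclosed : IsClosed (Set.range S) :=
      hanti.isClosed_range S.uniformContinuous
    set N : Submodule ℂ E := LinearMap.range (S : E →ₗ[ℂ] E) with hN
    have hNclosed : IsClosed (N : Set E) := by
      simpa [hN, LinearMap.coe_range] using hclosed
    haveI : CompleteSpace N := hNclosed.completeSpace_coe
    -- codomain restriction
    have hmem : ∀ x, S x ∈ N := fun x => LinearMap.mem_range_self _ x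
    let Sc : E →L[ℂ] N := S.codRestrict N hmem
    have hker : LinearMap.ker (Sc : E →ₗ[ℂ] N) = ⊥ := by
      rw [LinearMap.ker_eq_bot]
      intro x y hxy
      have : S x = S y := congrArg Subtype.val hxy
      exact hanti.injective this
    have hrange : LinearMap.range (Sc : E →ₗ[ℂ] N) = ⊤ := by
      rw [LinearMap.range_eq_top]
      rintro ⟨y, hy⟩
      obtain ⟨x, hx⟩ := hy
      exact ⟨x, Subtype.ext hx⟩
    let e : E ≃L[ℂ] N := ContinuousLinearEquiv.ofBijective Sc hker hrange
    let K : E →L[ℂ] E :=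
      (e.symm : N →L[ℂ] E).comp ((N.orthogonalProjectionOnto : E →L[ℂ] N))
    have hKS : ∀ f, K (S f) = f := by
      intro f
      have h1 : (N.orthogonalProjectionOnto) (S f) = ⟨S f, hmem f⟩ :=
        N.orthogonalProjectionOnto_mem_subspace_eq_self ⟨S f, hmem f⟩
      have h2 : e f = ⟨S f, hmem f⟩ := rfl
      show e.symm ((N.orthogonalProjectionOnto) (S f)) = f
      rw [h1, ← h2, e.symm_apply_apply]
    refine ⟨K, fun f => ?_⟩
    have := (hS f).mapL K
    simpa [K.map_smul_of_tower, hKS f] using this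
  · rintro ⟨K, hK⟩
    have key : ∀ f : E, K (S f) = f := by
      intro f
      have h1 := (hS f).mapL K
      have h2 : HasSum
          (fun j => (v j * w j) • K (proj (V' j)
            (ContinuousLinearMap.adjoint (Γ j) (Λ j (proj (W j) f))))) (K (S f)) := by
        simpa [K.map_smul_of_tower] using h1
      exact h2.unique (hK f)
    refine ⟨(‖K‖ + 1)⁻¹, by positivity, fun f => ?_⟩
    have h3 : ‖f‖ ≤ (‖K‖ + 1) * ‖S f‖ := by
      calc ‖f‖ = ‖K (S f)‖ := by rw [key f]
        _ ≤ ‖K‖ * ‖S f‖ := K.le_opNorm _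
        _ ≤ (‖K‖ + 1) * ‖S f‖ := by nlinarith [norm_nonneg (S f), norm_nonneg K]
    rw [inv_mul_le_iff₀ (by positivity)] at *
    linarith [h3]
end

section
/- Let Λ⊕Γ = {(W_j ⊕ V_j, Λ_j ⊕ Γ_j, v_j)}_{j∈J} be a g-fusion frame for H ⊕ X with frame operator S = S_{Λ⊕Γ}. Then {(S^{-1/2}(W_j ⊕ V_j), (Λ_j ⊕ Γ_j) P_{W_j⊕V_j} S^{-1/2}, v_j)}_{j∈J} is a Parseval g-fusion frame for H ⊕ X, i.e., Σ_j v_j² ‖(Λ_j⊕Γ_j) P_{W_j⊕V_j} S^{-1/2} P_{S^{-1/2}(W_j⊕V_j)}(f,g)‖² = ‖(f,g)‖² for all (f,g). -/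
open ContinuousLinearMap

noncomputable def projOp {E : Type*} [NormedAddCommGroup E] [InnerProductSpace ℂ E]
    [CompleteSpace E] (W : Submodule ℂ E) : E →L[ℂ] E :=
  haveI : CompleteSpace W.topologicalClosure := W.isClosed_topologicalClosure.completeSpace_coe
  W.topologicalClosure.subtypeL.comp (W.topologicalClosure.orthogonalProjectionOnto)

/-- The operator U ⊕ V acting between ℓ²-direct sums of two Hilbert spaces. -/
noncomputable def oplus {E F E' F' : Type*} [NormedAddCommGroup E] [NormedSpace ℂ E]
    [NormedAddCommGroup F] [NormedSpace ℂ F] [NormedAddCommGroup E'] [NormedSpace ℂ E']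
    [NormedAddCommGroup F'] [NormedSpace ℂ F']
    (A : E →L[ℂ] E') (B : F →L[ℂ] F') : WithLp 2 (E × F) →L[ℂ] WithLp 2 (E' × F') :=
  ((WithLp.prodContinuousLinearEquiv 2 ℂ E' F').symm.toContinuousLinearMap).comp
    ((A.prodMap B).comp (WithLp.prodContinuousLinearEquiv 2 ℂ E F).toContinuousLinearMap)

/-- The subspace W ⊕ V of the ℓ²-direct sum. -/
noncomputable def prodSub {E F : Type*} [NormedAddCommGroup E] [NormedSpace ℂ E]
    [NormedAddCommGroup F] [NormedSpace ℂ F] (W : Submodule ℂ E) (V : Submodule ℂ F) :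
    Submodule ℂ (WithLp 2 (E × F)) :=
  (W.prod V).map (WithLp.prodContinuousLinearEquiv 2 ℂ E F).symm.toContinuousLinearMap.toLinearMap

section Aux

variable {E F : Type*} [NormedAddCommGroup E] [InnerProductSpace ℂ E]
    [NormedAddCommGroup F] [InnerProductSpace ℂ F]

-- P is self-adjoint (as an inner-product identity)
lemma st16_selfadj (W : Submodule ℂ E) (V : Submodule ℂ F) [CompleteSpace W] [CompleteSpace V]
    (x y : WithLp 2 (E × F)) :
    (inner ℂ (oplus (_root_.proj W) (_root_.proj V) x) y : ℂ) =
      inner ℂ x (oplus (_root_.proj W) (_root_.proj V) y) := by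
  rw [WithLp.prod_inner_apply, WithLp.prod_inner_apply]
  exact congrArg₂ (· + ·) (Submodule.inner_starProjection_left_eq_right W x.fst y.fst)
    (Submodule.inner_starProjection_left_eq_right V x.snd y.snd)

lemma st16_zero (W : Submodule ℂ E) (V : Submodule ℂ F) [CompleteSpace W] [CompleteSpace V]
    (x : WithLp 2 (E × F)) (hx : ∀ w ∈ prodSub W V, (inner ℂ w x : ℂ) = 0) :
    oplus (_root_.proj W) (_root_.proj V) x = 0 := by
  have h1 : x.fst ∈ Wᗮ := by
    rw [Submodule.mem_orthogonal]
    intro w hw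
    have := hx ((WithLp.prodContinuousLinearEquiv 2 ℂ E F).symm (w, 0))
      (Submodule.mem_map.2 ⟨(w, 0), ⟨hw, V.zero_mem⟩, rfl⟩)
    simpa [WithLp.prod_inner_apply] using this
  have h2 : x.snd ∈ Vᗮ := by
    rw [Submodule.mem_orthogonal]
    intro w hw
    have := hx ((WithLp.prodContinuousLinearEquiv 2 ℂ E F).symm (0, w))
      (Submodule.mem_map.2 ⟨(0, w), ⟨W.zero_mem, hw⟩, rfl⟩)
    simpa [WithLp.prod_inner_apply] using this
  have e1 : (oplus (_root_.proj W) (_root_.proj V) x).fst = 0 := by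
    show ((W.orthogonalProjectionOnto x.fst : E)) = 0
    rw [Submodule.orthogonalProjectionOnto_apply_of_mem_orthogonal h1]
    rfl
  have e2 : (oplus (_root_.proj W) (_root_.proj V) x).snd = 0 := by
    show ((V.orthogonalProjectionOnto x.snd : F)) = 0
    rw [Submodule.orthogonalProjectionOnto_apply_of_mem_orthogonal h2]
    rfl
  exact (WithLp.ext_iff 2).2 (Prod.ext e1 e2)

-- the Fact: P R projOp(cl (R(W⊕V))) u = P R u for self-adjoint R
lemma st16_fact [CompleteSpace E] [CompleteSpace F]
    (W : Submodule ℂ E) (V : Submodule ℂ F) [CompleteSpace W] [CompleteSpace V]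
    (R : WithLp 2 (E × F) →L[ℂ] WithLp 2 (E × F)) (hR : IsSelfAdjoint R)
    (u : WithLp 2 (E × F)) :
    oplus (_root_.proj W) (_root_.proj V) (R (projOp ((prodSub W V).map R.toLinearMap) u)) =
      oplus (_root_.proj W) (_root_.proj V) (R u) := by
  set K := (prodSub W V).map R.toLinearMap with hK
  haveI : CompleteSpace K.topologicalClosure := K.isClosed_topologicalClosure.completeSpace_coe
  set n := u - projOp K u with hn
  have hnmem : n ∈ K.topologicalClosureᗮ :=
    Submodule.sub_starProjection_mem_orthogonal (K := K.topologicalClosure) u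
  have hPn : oplus (_root_.proj W) (_root_.proj V) (R n) = 0 := by
    apply st16_zero
    intro w hw
    have h1 : (inner ℂ w (R n) : ℂ) = inner ℂ (R w) n := by
      conv_lhs => rw [← hR.adjoint_eq]
      exact ContinuousLinearMap.adjoint_inner_right R w n
    rw [h1]
    exact Submodule.inner_right_of_mem_orthogonal
      (Submodule.le_topologicalClosure K (Submodule.mem_map.2 ⟨w, hw, rfl⟩)) hnmem
  have : R u = R (projOp K u) + R n := by rw [hn]; simp
  rw [this, map_add, hPn, add_zero]

end Aux

set_option maxHeartbeats 1000000 in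
/-- the canonical S^{-1/2}-transform of a g-fusion frame Λ⊕Γ for H ⊕ X is a
Parseval g-fusion frame, where R = S^{-1/2} is the positive square root of S⁻¹. -/
theorem stmt16 {ι E F : Type*} [NormedAddCommGroup E] [InnerProductSpace ℂ E] [CompleteSpace E]
    [NormedAddCommGroup F] [InnerProductSpace ℂ F] [CompleteSpace F]
    {G X : ι → Type*} [∀ j, NormedAddCommGroup (G j)] [∀ j, InnerProductSpace ℂ (G j)]
    [∀ j, CompleteSpace (G j)] [∀ j, NormedAddCommGroup (X j)] [∀ j, InnerProductSpace ℂ (X j)]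
    [∀ j, CompleteSpace (X j)]
    (W : ι → Submodule ℂ E) [∀ j, CompleteSpace (W j)]
    (Vs : ι → Submodule ℂ F) [∀ j, CompleteSpace (Vs j)]
    (v : ι → ℝ) (hv : ∀ j, 0 < v j)
    (Λ : ∀ j, E →L[ℂ] G j) (Γ : ∀ j, F →L[ℂ] X j)
    (A₁ B₁ : ℝ) (hA₁ : 0 < A₁) (hAB : A₁ ≤ B₁)
    (hframe : ∀ u : WithLp 2 (E × F),
      Summable (fun j => (v j) ^ 2 *
        ‖oplus (Λ j) (Γ j) (oplus (proj (W j)) (proj (Vs j)) u)‖ ^ 2) ∧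
      A₁ * ‖u‖ ^ 2 ≤
        ∑' j, (v j) ^ 2 * ‖oplus (Λ j) (Γ j) (oplus (proj (W j)) (proj (Vs j)) u)‖ ^ 2 ∧
      ∑' j, (v j) ^ 2 * ‖oplus (Λ j) (Γ j) (oplus (proj (W j)) (proj (Vs j)) u)‖ ^ 2 ≤
        B₁ * ‖u‖ ^ 2)
    (S : WithLp 2 (E × F) ≃L[ℂ] WithLp 2 (E × F))
    (hS : ∀ u : WithLp 2 (E × F), HasSum
      (fun j => (v j) ^ 2 • oplus (proj (W j)) (proj (Vs j))
        (ContinuousLinearMap.adjoint (oplus (Λ j) (Γ j))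
          (oplus (Λ j) (Γ j) (oplus (proj (W j)) (proj (Vs j)) u)))) (S u))
    (R : WithLp 2 (E × F) ≃L[ℂ] WithLp 2 (E × F))
    (hRpos : ContinuousLinearMap.IsPositive R.toContinuousLinearMap)
    (hRR : ∀ u, R (R u) = S.symm u) :
    ∀ u : WithLp 2 (E × F),
      Summable (fun j => (v j) ^ 2 *
        ‖oplus (Λ j) (Γ j) (oplus (proj (W j)) (proj (Vs j))
          (R (projOp ((prodSub (W j) (Vs j)).map R.toContinuousLinearMap.toLinearMap) u)))‖ ^ 2) ∧
      ∑' j, (v j) ^ 2 *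
        ‖oplus (Λ j) (Γ j) (oplus (proj (W j)) (proj (Vs j))
          (R (projOp ((prodSub (W j) (Vs j)).map R.toContinuousLinearMap.toLinearMap) u)))‖ ^ 2 =
        ‖u‖ ^ 2 := by
  intro u
  have hRsa : IsSelfAdjoint R.toContinuousLinearMap := hRpos.isSelfAdjoint
  have hcomm : ∀ z, R (S z) = S (R z) := by
    intro z
    apply S.symm.injective
    conv_lhs => rw [← hRR (R (S z)), hRR (S z), S.symm_apply_apply]
    rw [S.symm_apply_apply]
  have hRinner : ∀ x y : WithLp 2 (E × F), (inner ℂ (R x) y : ℂ) = inner ℂ x (R y) := by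
    intro x y
    have h1 := ContinuousLinearMap.adjoint_inner_left R.toContinuousLinearMap y x
    rw [hRsa.adjoint_eq] at h1
    simpa using h1
  have hval : (inner ℂ (R u) (S (R u)) : ℂ) = ((‖u‖ ^ 2 : ℝ) : ℂ) := by
    calc (inner ℂ (R u) (S (R u)) : ℂ) = inner ℂ u (R (S (R u))) := hRinner u (S (R u))
      _ = inner ℂ u u := by rw [hcomm (R u), hRR u, S.apply_symm_apply]
      _ = _ := by rw [inner_self_eq_norm_sq_to_K]; norm_cast
  have hsum := (innerSL ℂ (R u)).hasSum (hS (R u))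
  have hterm : ∀ j, (innerSL ℂ (R u)) ((v j) ^ 2 • oplus (_root_.proj (W j)) (_root_.proj (Vs j))
      (ContinuousLinearMap.adjoint (oplus (Λ j) (Γ j))
        (oplus (Λ j) (Γ j) (oplus (_root_.proj (W j)) (_root_.proj (Vs j)) (R u)))))
      = (((v j) ^ 2 * ‖oplus (Λ j) (Γ j)
          (oplus (_root_.proj (W j)) (_root_.proj (Vs j)) (R u))‖ ^ 2 : ℝ) : ℂ) := by
    intro j
    rw [innerSL_apply_apply, RCLike.real_smul_eq_coe_smul (K := ℂ), inner_smul_right,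
      ← st16_selfadj, ContinuousLinearMap.adjoint_inner_right, inner_self_eq_norm_sq_to_K]
    push_cast
    norm_cast
  rw [funext hterm] at hsum
  rw [show ((innerSL ℂ) (R u)) (S (R u)) = ((‖u‖ ^ 2 : ℝ) : ℂ) from hval] at hsum
  have h3 : HasSum (fun j => (v j) ^ 2 *
      ‖oplus (Λ j) (Γ j) (oplus (_root_.proj (W j)) (_root_.proj (Vs j)) (R u))‖ ^ 2)
      (‖u‖ ^ 2) := by
    have := Complex.reCLM.hasSum hsum
    simpa only [Complex.reCLM_apply, Complex.ofReal_re] using this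
  have hkeyj : ∀ j, oplus (_root_.proj (W j)) (_root_.proj (Vs j))
      (R (projOp ((prodSub (W j) (Vs j)).map R.toContinuousLinearMap.toLinearMap) u)) =
      oplus (_root_.proj (W j)) (_root_.proj (Vs j)) (R u) := fun j =>
    st16_fact (W j) (Vs j) R.toContinuousLinearMap hRsa u
  simp only [hkeyj]
  exact ⟨h3.summable, h3.tsum_eq⟩
end
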